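/- The sequence μₙ = (-1)ⁿ b_{n+1}, n = 0, 1, 2, …, where bₙ are the Bernoulli numbers of the second kind, is a completely monotonic sequence: μₙ ≥ 0 for all n and (-1)^k Δ^k μₙ ≥ 0 for all integers n, k ≥ 0, where Δ^k μₙ = Σ_{m=0}^k (-1)^m C(k,m) μ_{n+k-m}. -/

import Mathlib

open Finset Nat
noncomputable section CM4
def qq (n : ℕ) (s : ℝ) : ℝ := ∏ i ∈ Finset.range n, (s - i)
def AA (N m : ℕ) : ℝ := (-1 : ℝ) ^ (N - 1 - m) * (Nat.factorial (N - 1 - m) : ℝ) * (N.choose m)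
lemma qq_succ (n : ℕ) (s : ℝ) : qq (n + 1) s = qq n s * (s - n) := Finset.prod_range_succ _ _
lemma AA_rec {m n : ℕ} (hmn : m ≤ n) :
    AA (n + 2) (m + 1)
      = AA (n + 1) m + (((m : ℝ) + 1) - (n + 1)) * AA (n + 1) (m + 1)
        + (if m = n then 1 else 0) := by
  rcases eq_or_lt_of_le hmn with rfl | hlt
  · rw [if_pos rfl]
    simp only [AA, show m + 2 - 1 - (m + 1) = 0 by omega, show m + 1 - 1 - m = 0 by omega,
      show m + 1 - 1 - (m + 1) = 0 by omega, Nat.choose_succ_self_right, Nat.choose_self,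
      pow_zero, Nat.factorial_zero]
    push_cast; ring
  · obtain ⟨d, rfl⟩ : ∃ d, n = m + d + 1 := ⟨n - m - 1, by omega⟩
    rw [if_neg (by omega)]
    simp only [AA,
      show m + d + 1 + 2 - 1 - (m + 1) = d + 1 by omega,
      show m + d + 1 + 1 - 1 - m = d + 1 by omega,
      show m + d + 1 + 1 - 1 - (m + 1) = d by omega]
    have hp : (m + d + 1 + 2).choose (m + 1)
        = (m + d + 2).choose m + (m + d + 2).choose (m + 1) := by
      rw [show m + d + 1 + 2 = (m + d + 2) + 1 by omega]
      exact Nat.choose_succ_succ _ _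
    rw [show m + d + 1 + 1 = m + d + 2 by omega, hp]
    have hf : (Nat.factorial (d + 1) : ℝ) = (d + 1) * Nat.factorial d := by
      rw [Nat.factorial_succ]; push_cast; ring
    rw [hf]; push_cast; ring
lemma hasDerivAt_qq (n : ℕ) (s : ℝ) :
    HasDerivAt (fun t => qq (n + 1) t) (∑ m ∈ Finset.range (n + 1), AA (n + 1) m * qq m s) s := by
  induction n generalizing s with
  | zero =>
      have h0 : (fun t : ℝ => qq 1 t) = fun t : ℝ => t - ((0 : ℕ) : ℝ) :=
        funext fun t => by simp [qq]
      rw [h0]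
      have : HasDerivAt (fun t : ℝ => t - ((0 : ℕ) : ℝ)) 1 s := (hasDerivAt_id s).sub_const _
      convert this using 1
      simp [AA, qq]
  | succ n ih =>
      have h0 : (fun t : ℝ => qq (n + 1 + 1) t)
          = fun t : ℝ => qq (n + 1) t * (t - ((n + 1 : ℕ) : ℝ)) :=
        funext fun t => qq_succ (n + 1) t
      rw [h0]
      have h1 : HasDerivAt (fun t : ℝ => qq (n + 1) t * (t - ((n + 1 : ℕ) : ℝ)))
          ((∑ m ∈ Finset.range (n + 1), AA (n + 1) m * qq m s) * (s - ((n + 1 : ℕ) : ℝ))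
            + qq (n + 1) s * 1) s := (ih s).fun_mul ((hasDerivAt_id s).sub_const ((n + 1 : ℕ) : ℝ))
      convert h1 using 1
      simp only [id, mul_one]
      rw [Finset.sum_mul]
      have key : ∀ m ∈ Finset.range (n + 1),
          AA (n + 1) m * qq m s * (s - ((n + 1 : ℕ) : ℝ))
            = AA (n + 1) m * qq (m + 1) s
              + AA (n + 1) m * (((m : ℝ)) - ((n : ℝ) + 1)) * qq m s := by
        intro m _
        rw [qq_succ m s]; push_cast; ring
      rw [Finset.sum_congr rfl key, Finset.sum_add_distrib,
        Finset.sum_range_succ' (fun i => AA (n + 1) i * (((i : ℕ) : ℝ) - ((n : ℝ) + 1)) * qq i s) n]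
      have hextend : (∑ i ∈ Finset.range n,
            AA (n + 1) (i + 1) * (((i + 1 : ℕ) : ℝ) - ((n : ℝ) + 1)) * qq (i + 1) s)
          = ∑ i ∈ Finset.range (n + 1),
            AA (n + 1) (i + 1) * (((i + 1 : ℕ) : ℝ) - ((n : ℝ) + 1)) * qq (i + 1) s := by
        rw [Finset.sum_range_succ]
        have : (((n + 1 : ℕ) : ℝ) - ((n : ℝ) + 1)) = 0 := by push_cast; ring
        rw [this]; ring
      rw [hextend]
      have hq : qq (n + 1) s
          = ∑ m ∈ Finset.range (n + 1), (if m = n then (1 : ℝ) else 0) * qq (m + 1) s := by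
        simp only [ite_mul, one_mul, zero_mul]
        rw [Finset.sum_ite_eq' (Finset.range (n + 1)) n (fun m => qq (m + 1) s)]
        simp
      rw [hq,
        show (∑ m ∈ Finset.range (n + 1 + 1), AA (n + 1 + 1) m * qq m s)
          = ∑ m ∈ Finset.range (n + 1), AA (n + 2) (m + 1) * qq (m + 1) s
            + AA (n + 2) 0 * qq 0 s from Finset.sum_range_succ' _ _]
      have hs1 : (∑ m ∈ Finset.range (n + 1), AA (n + 2) (m + 1) * qq (m + 1) s)
          = ∑ m ∈ Finset.range (n + 1),
              (AA (n + 1) m * qq (m + 1) s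
                + AA (n + 1) (m + 1) * (((m + 1 : ℕ) : ℝ) - ((n : ℝ) + 1)) * qq (m + 1) s
                + (if m = n then (1 : ℝ) else 0) * qq (m + 1) s) := by
        refine Finset.sum_congr rfl fun m hm => ?_
        rw [AA_rec (Nat.lt_succ_iff.mp (Finset.mem_range.mp hm))]
        push_cast; ring
      rw [hs1, Finset.sum_add_distrib, Finset.sum_add_distrib]
      have hc : AA (n + 2) 0 * qq 0 s
          = AA (n + 1) 0 * (((0 : ℕ) : ℝ) - ((n : ℝ) + 1)) * qq 0 s := by
        simp only [AA, Nat.choose_zero_right, show n + 2 - 1 - 0 = n + 1 by omega,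
          show n + 1 - 1 - 0 = n by omega, Nat.factorial_succ]
        push_cast; ring
      rw [hc]; push_cast; ring


lemma bddabove_aux {g : ℕ → ℝ} (h : Summable g) : ∃ C : ℝ, 0 ≤ C ∧ ∀ n, |g n| ≤ C := by
  have h0 : Filter.Tendsto (fun n => |g n|) Filter.atTop (nhds 0) := by
    simpa using (h.tendsto_atTop_zero.abs)
  obtain ⟨C, hC⟩ := h0.bddAbove_range
  exact ⟨C, le_trans (abs_nonneg _) (hC ⟨0, rfl⟩), fun n => hC ⟨n, rfl⟩⟩

lemma coeff_bound {a : ℕ → ℝ} {y : ℝ}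
    (h : HasSum (fun n => a n * (1/2 : ℝ) ^ n) y) :
    ∃ C : ℝ, 0 ≤ C ∧ ∀ n, |a n| ≤ C * 2 ^ n := by
  obtain ⟨C, hC0, hC⟩ := bddabove_aux h.summable
  refine ⟨C, hC0, fun n => ?_⟩
  have h2 : |a n * (1/2 : ℝ)^n| ≤ C := hC n
  rw [abs_mul, abs_pow] at h2
  have : |(1/2 : ℝ)| = (2:ℝ)⁻¹ := by norm_num
  rw [this, inv_pow] at h2
  calc |a n| = |a n| * ((2:ℝ)^n)⁻¹ * 2^n := by field_simp
  _ ≤ C * 2^n := by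
      apply mul_le_mul_of_nonneg_right h2 (by positivity)

lemma coeff_zero {a : ℕ → ℝ} {C : ℝ} (hC0 : 0 ≤ C) (hC : ∀ n, |a n| ≤ C * 2 ^ n)
    (h : ∀ x : ℝ, 0 < x → x ≤ 1/4 → HasSum (fun n => a n * x ^ n) 0) :
    ∀ n, a n = 0 := by
  intro N
  induction N using Nat.strong_induction_on with
  | _ N ih =>
  have key : ∀ x : ℝ, 0 < x → x ≤ 1/4 → |a N| ≤ (2*C*2^(N+1)) * x := by
    intro x hx0 hx4
    have h2x : 2 * x ≤ 1/2 := by linarith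
    have h2x0 : 0 ≤ 2 * x := by linarith
    have h1 : HasSum (fun n => a (n + N) * x ^ (n + N)) 0 := by
      refine (hasSum_nat_add_iff (f := fun n => a n * x ^ n) N).mpr ?_
      have hz : ∑ i ∈ Finset.range N, a i * x ^ i = 0 := by
        refine Finset.sum_eq_zero fun i hi => ?_
        rw [ih i (Finset.mem_range.mp hi)]; ring
      rw [zero_add, hz]
      exact h x hx0 hx4
    have h2 : HasSum (fun n => a (n + 1 + N) * x ^ (n + 1 + N)) (-(a N * x ^ N)) := by
      have h1' : HasSum (fun n => a (n + N) * x ^ (n + N))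
          (-(a N * x ^ N) + ∑ i ∈ Finset.range 1, a (i + N) * x ^ (i + N)) := by
        simpa using h1
      exact (hasSum_nat_add_iff (f := fun n => a (n + N) * x ^ (n + N)) 1).mpr h1'
    have hGsum : HasSum (fun n : ℕ => (C * (2*x)^(N+1)) * (2*x)^n)
        ((C * (2*x)^(N+1)) * (1 - 2*x)⁻¹) := by
      have := hasSum_geometric_of_lt_one h2x0 (by linarith : 2*x < 1)
      simpa [div_eq_mul_inv] using this.mul_left (C * (2*x)^(N+1))
    have hbound : ∀ n : ℕ, ‖a (n + 1 + N) * x ^ (n + 1 + N)‖ ≤ (C * (2*x)^(N+1)) * (2*x)^n := by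
      intro n
      rw [Real.norm_eq_abs, abs_mul, abs_pow, abs_of_pos hx0]
      calc |a (n+1+N)| * x^(n+1+N) ≤ (C * 2^(n+1+N)) * x^(n+1+N) := by
            apply mul_le_mul_of_nonneg_right (hC _) (by positivity)
      _ = (C * (2*x)^(N+1)) * (2*x)^n := by rw [show n+1+N = (N+1)+n by omega, pow_add, pow_add, mul_pow, mul_pow]; ring
    have habs : ‖∑' n, a (n + 1 + N) * x ^ (n + 1 + N)‖ ≤ (C * (2*x)^(N+1)) * (1 - 2*x)⁻¹ :=
      tsum_of_norm_bounded hGsum hbound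
    rw [h2.tsum_eq, norm_neg, Real.norm_eq_abs, abs_mul, abs_pow, abs_of_pos hx0] at habs
    have hinv : (1 - 2*x)⁻¹ ≤ 2 := by
      rw [inv_le_comm₀ (by linarith) (by norm_num)]
      linarith
    have hstep : |a N| * x^N ≤ (2*C*2^(N+1)*x) * x^N := by
      calc |a N| * x^N ≤ (C * (2*x)^(N+1)) * (1 - 2*x)⁻¹ := habs
      _ ≤ (C * (2*x)^(N+1)) * 2 := by
          apply mul_le_mul_of_nonneg_left hinv (by positivity)
      _ = (2*C*2^(N+1)*x) * x^N := by rw [mul_pow, pow_succ]; ring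
    exact le_of_mul_le_mul_right hstep (by positivity)
  have hK : 0 ≤ 2*C*2^(N+1) := by positivity
  have heps : ∀ ε : ℝ, 0 < ε → |a N| ≤ ε := by
    intro ε hε
    set K := 2*C*2^(N+1) with hKdef
    have hx0 : 0 < min (1/4) (ε / (K+1)) := by
      apply lt_min (by norm_num)
      positivity
    calc |a N| ≤ K * min (1/4) (ε / (K+1)) := key _ hx0 (min_le_left _ _)
    _ ≤ K * (ε / (K+1)) := by
        apply mul_le_mul_of_nonneg_left (min_le_right _ _) hK
    _ ≤ ε := by
        rw [div_eq_mul_inv, ← mul_assoc]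
        rw [mul_comm K ε, mul_assoc]
        nth_rewrite 2 [← mul_one ε]
        apply mul_le_mul_of_nonneg_left _ hε.le
        rw [mul_inv_le_iff₀ (by positivity)]
        linarith
  have habs0 : |a N| = 0 := by
    by_contra h'
    have hpos : 0 < |a N| := lt_of_le_of_ne (abs_nonneg _) (Ne.symm h')
    have := heps (|a N|/2) (by linarith)
    linarith
  exact abs_eq_zero.mp habs0

def ll (n : ℕ) : ℝ := (-1 : ℝ)^n / (n + 1)

lemma ll_abs_le (n : ℕ) : |ll n| ≤ 1 := by
  rw [ll, abs_div, abs_pow, abs_neg, abs_one, one_pow,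
    abs_of_pos (show (0:ℝ) < (n:ℝ) + 1 by positivity), div_le_one (by positivity)]
  linarith [Nat.cast_nonneg (α := ℝ) n]

lemma hasSum_ll {x : ℝ} (hx0 : 0 < x) (hx : x < 1) :
    HasSum (fun n => ll n * x ^ n) (Real.log (1 + x) / x) := by
  have habs : |(-x)| < 1 := by rw [abs_neg, abs_of_pos hx0]; exact hx
  have h1 := Real.hasSum_pow_div_log_of_abs_lt_one habs
  have h2 := h1.mul_right (-x)⁻¹
  have hne : x ≠ 0 := ne_of_gt hx0
  have hfun : (fun n : ℕ => (-x)^(n+1)/((n:ℝ)+1) * (-x)⁻¹) = fun n => ll n * x^n := by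
    funext n
    rw [ll, pow_succ, neg_pow]
    field_simp
  have hval : -Real.log (1 - -x) * (-x)⁻¹ = Real.log (1 + x) / x := by
    rw [show (1 : ℝ) - -x = 1 + x by ring]
    field_simp
  rw [hfun, hval] at h2
  convert h2 using 2

lemma b_rec {b : ℕ → ℝ}
    (hb : ∀ x : ℝ, |x| < 1 → HasSum (fun n : ℕ => b n * x ^ n)
        (if x = 0 then 1 else x / Real.log (1 + x))) (n : ℕ) :
    (∑ k ∈ Finset.range (n + 1), b k * ll (n - k)) = if n = 0 then 1 else 0 := by
  obtain ⟨C, hC0, hC⟩ := coeff_bound (hb (1/2) (by rw [abs_of_pos] <;> norm_num))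
  set P : ℕ → ℝ := fun n => ∑ k ∈ Finset.range (n + 1), b k * ll (n - k) with hP
  set δ : ℕ → ℝ := fun n => if n = 0 then 1 else 0 with hδ
  suffices h : ∀ n, P n - δ n = 0 by
    have := h n; have h2 : P n = δ n := by linarith
    simpa [hP, hδ] using h2
  have hbound : ∀ m : ℕ, |P m - δ m| ≤ (2*C + 1) * 2 ^ m := by
    intro m
    have h1 : |P m| ≤ C * 2 ^ (m+1) := by
      calc |P m| ≤ ∑ k ∈ Finset.range (m + 1), |b k * ll (m - k)| :=
            Finset.abs_sum_le_sum_abs _ _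
      _ ≤ ∑ k ∈ Finset.range (m + 1), C * 2 ^ k := by
          refine Finset.sum_le_sum fun k _ => ?_
          rw [abs_mul]
          calc |b k| * |ll (m - k)| ≤ (C * 2^k) * 1 :=
                mul_le_mul (hC k) (ll_abs_le _) (abs_nonneg _) (by positivity)
          _ = C * 2^k := by ring
      _ = C * ∑ k ∈ Finset.range (m+1), 2 ^ k := by rw [Finset.mul_sum]
      _ ≤ C * 2 ^ (m+1) := by
          apply mul_le_mul_of_nonneg_left _ hC0
          rw [geom_sum_eq (by norm_num : (2:ℝ) ≠ 1)]
          norm_num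
    have h2 : |δ m| ≤ 1 := by rw [hδ]; dsimp only; split <;> norm_num
    calc |P m - δ m| ≤ |P m| + |δ m| := abs_sub _ _
    _ ≤ C * 2^(m+1) + 1 := add_le_add h1 h2
    _ ≤ (2*C+1) * 2^m := by
        have h3 : (1:ℝ) ≤ 2 ^ m := one_le_pow₀ (by norm_num)
        rw [pow_succ]; nlinarith
  have hsum : ∀ x : ℝ, 0 < x → x ≤ 1/4 → HasSum (fun n => (P n - δ n) * x ^ n) 0 := by
    intro x hx0 hx4
    have hx1 : |x| < 1 := by rw [abs_of_pos hx0]; linarith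
    have hfb := hb x hx1
    rw [if_neg (ne_of_gt hx0)] at hfb
    have hfl := hasSum_ll hx0 (by linarith)
    have hnb : Summable (fun n => ‖b n * x ^ n‖) := by
      refine Summable.of_nonneg_of_le (fun n => norm_nonneg _) (fun n => ?_)
        (((summable_geometric_of_lt_one (by norm_num) (by norm_num : (1:ℝ)/2 < 1)).mul_left C))
      rw [Real.norm_eq_abs, abs_mul, abs_pow, abs_of_pos hx0]
      calc |b n| * x ^ n ≤ (C * 2^n) * x^n :=
            mul_le_mul_of_nonneg_right (hC n) (by positivity)
      _ = C * (2*x)^n := by rw [mul_pow]; ring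
      _ ≤ C * (1/2)^n := by
          apply mul_le_mul_of_nonneg_left _ hC0
          exact pow_le_pow_left₀ (by linarith) (by linarith) n
    have hnl : Summable (fun n => ‖ll n * x ^ n‖) := by
      refine Summable.of_nonneg_of_le (fun n => norm_nonneg _) (fun n => ?_)
        (summable_geometric_of_lt_one (by norm_num) (by norm_num : (1:ℝ)/4 < 1))
      rw [Real.norm_eq_abs, abs_mul, abs_pow, abs_of_pos hx0]
      calc |ll n| * x ^ n ≤ 1 * x^n := mul_le_mul_of_nonneg_right (ll_abs_le n) (by positivity)
      _ = x ^ n := one_mul _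
      _ ≤ (1/4)^n := pow_le_pow_left₀ hx0.le hx4 n
    have hps := hasSum_sum_range_mul_of_summable_norm hnb hnl
    rw [hfb.tsum_eq, hfl.tsum_eq] at hps
    have hval : x / Real.log (1 + x) * (Real.log (1 + x) / x) = 1 := by
      have hlog : 0 < Real.log (1 + x) := Real.log_pos (by linarith)
      field_simp
    rw [hval] at hps
    have hfun : (fun n => ∑ k ∈ Finset.range (n + 1), (b k * x ^ k) * (ll (n - k) * x ^ (n - k)))
        = fun n => P n * x ^ n := by
      funext m
      rw [hP, Finset.sum_mul]
      refine Finset.sum_congr rfl fun k hk => ?_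
      have hk' : k ≤ m := Nat.lt_succ_iff.mp (Finset.mem_range.mp hk)
      have hxp : x ^ k * x ^ (m - k) = x ^ m := by rw [← pow_add]; congr 1; omega
      rw [mul_mul_mul_comm, hxp]
    rw [hfun] at hps
    have hδsum : HasSum (fun n => δ n * x ^ n) 1 := by
      have h0 := hasSum_single (f := fun n => δ n * x ^ n) 0
        (fun b' hb' => by simp [hδ, if_neg hb'])
      simpa [hδ] using h0
    have := hps.sub hδsum
    simpa [sub_mul] using this
  exact coeff_zero (by positivity) hbound hsum

def cc (n : ℕ) : ℝ := (∫ s in (0:ℝ)..1, qq n s) / (Nat.factorial n : ℝ)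

lemma continuous_qq (n : ℕ) : Continuous (qq n) := by
  unfold qq
  exact continuous_finset_prod _ fun i _ => continuous_id.sub continuous_const

lemma qq_zero_eval (n : ℕ) : qq (n + 1) 0 = 0 := by
  apply Finset.prod_eq_zero (Finset.mem_range.mpr (Nat.succ_pos n))
  simp

lemma qq_one_eval (n : ℕ) : qq (n + 2) 1 = 0 := by
  apply Finset.prod_eq_zero (i := 1) (Finset.mem_range.mpr (by omega))
  simp

lemma AA_ll {k n : ℕ} (h : k ≤ n) :
    AA (n + 1) k / (Nat.factorial (n + 1) : ℝ) = ll (n - k) / (Nat.factorial k : ℝ) := by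
  have hnat : (n+1).choose k * Nat.factorial k * Nat.factorial (n+1-k) = Nat.factorial (n+1) :=
    Nat.choose_mul_factorial_mul_factorial (by omega)
  have hf : Nat.factorial (n+1-k) = Nat.factorial (n-k) * ((n-k) + 1) := by
    rw [show n+1-k = (n-k)+1 by omega, Nat.factorial_succ]; ring
  rw [hf] at hnat
  have hAA : AA (n+1) k = (-1:ℝ)^(n-k) * (Nat.factorial (n-k) : ℝ) * ((n+1).choose k) := by
    rw [AA, show n+1-1-k = n-k by omega]
  rw [hAA, ll]
  have h1 : (Nat.factorial (n+1) : ℝ)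
      = ((n+1).choose k : ℝ) * (Nat.factorial k : ℝ) * ((Nat.factorial (n-k) : ℝ) * (((n-k:ℕ):ℝ) + 1)) := by
    rw [← hnat]; push_cast; ring
  have hk : (0:ℝ) < (Nat.factorial k : ℝ) := by exact_mod_cast Nat.factorial_pos k
  have hnf : (0:ℝ) < (Nat.factorial (n+1) : ℝ) := by exact_mod_cast Nat.factorial_pos (n+1)
  have hnk1 : (0:ℝ) < ((n-k:ℕ):ℝ) + 1 := by positivity
  rw [div_eq_div_iff (ne_of_gt hnf) (ne_of_gt hk), h1, div_mul_eq_mul_div,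
    eq_div_iff (ne_of_gt hnk1)]
  ring

lemma cc_rec (n : ℕ) :
    (∑ k ∈ Finset.range (n + 1), cc k * ll (n - k)) = if n = 0 then 1 else 0 := by
  have h1 : ∀ k ∈ Finset.range (n+1), cc k * ll (n - k)
      = (∫ s in (0:ℝ)..1, AA (n+1) k * qq k s) / (Nat.factorial (n+1) : ℝ) := by
    intro k hk
    have hk' : k ≤ n := Nat.lt_succ_iff.mp (Finset.mem_range.mp hk)
    have hAAll := AA_ll hk'
    have hkf : (Nat.factorial k : ℝ) ≠ 0 := by
      exact_mod_cast Nat.factorial_ne_zero k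
    have hnf : (Nat.factorial (n+1) : ℝ) ≠ 0 := by
      exact_mod_cast Nat.factorial_ne_zero (n+1)
    rw [div_eq_div_iff hnf hkf] at hAAll
    rw [cc, intervalIntegral.integral_const_mul, div_mul_eq_mul_div, div_eq_div_iff hkf hnf]
    linear_combination (-(∫ s in (0:ℝ)..1, qq k s)) * hAAll
  rw [Finset.sum_congr rfl h1, ← Finset.sum_div, ← intervalIntegral.integral_finset_sum
    (fun k _ => (((continuous_qq k).intervalIntegrable 0 1).const_mul _))]
  have hftc : (∫ s in (0:ℝ)..1, ∑ k ∈ Finset.range (n+1), AA (n+1) k * qq k s)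
      = qq (n+1) 1 - qq (n+1) 0 := by
    refine intervalIntegral.integral_eq_sub_of_hasDerivAt (fun t _ => hasDerivAt_qq n t) ?_
    exact (continuous_finset_sum _ fun k _ => continuous_const.mul (continuous_qq k)).intervalIntegrable 0 1
  rw [hftc, qq_zero_eval, sub_zero]
  rcases n with _ | m
  · simp [qq, Nat.factorial]
  · rw [qq_one_eval, if_neg (by omega), zero_div]

lemma b_eq_cc {b : ℕ → ℝ}
    (hb : ∀ x : ℝ, |x| < 1 → HasSum (fun n : ℕ => b n * x ^ n)
        (if x = 0 then 1 else x / Real.log (1 + x))) (n : ℕ) :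
    b n = cc n := by
  induction n using Nat.strong_induction_on with
  | _ n ih =>
  have h1 := b_rec hb n
  have h2 := cc_rec n
  rw [Finset.sum_range_succ] at h1 h2
  have h3 : ∑ k ∈ Finset.range n, b k * ll (n - k) = ∑ k ∈ Finset.range n, cc k * ll (n - k) :=
    Finset.sum_congr rfl fun k hk => by rw [ih k (Finset.mem_range.mp hk)]
  rw [h3] at h1
  have h4 : ll (n - n) = 1 := by simp [ll]
  rw [h4, mul_one] at h1 h2
  linarith [h1.trans h2.symm]

def JJ (a c : ℝ) : ℝ := ∫ t in (0:ℝ)..1, t ^ a * (1 - t) ^ c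

lemma JJ_integrand_integrable {a c : ℝ} (ha : -1 < a) (hc : -1 < c) :
    IntervalIntegrable (fun t : ℝ => t ^ a * (1 - t) ^ c) MeasureTheory.volume 0 1 := by
  have h1 : IntervalIntegrable (fun t : ℝ => t ^ a * (1 - t) ^ c)
      MeasureTheory.volume 0 (1/2) := by
    apply IntervalIntegrable.mul_continuousOn
      (intervalIntegral.intervalIntegrable_rpow' ha)
    apply ContinuousOn.rpow_const ((continuousOn_const).sub continuousOn_id)
    intro t ht
    rw [Set.uIcc_of_le (by norm_num : (0:ℝ) ≤ 1/2)] at ht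
    left
    intro hcon
    simp only [Pi.sub_apply, id] at hcon
    have := ht.2
    linarith
  have h2 : IntervalIntegrable (fun t : ℝ => t ^ a * (1 - t) ^ c)
      MeasureTheory.volume (1/2) 1 := by
    have hbase := (intervalIntegral.intervalIntegrable_rpow' (a := (1:ℝ)/2) (b := (0:ℝ)) hc).comp_sub_left 1
    norm_num at hbase
    refine hbase.continuousOn_mul ?_
    apply ContinuousOn.rpow_const continuousOn_id
    intro t ht
    rw [Set.uIcc_of_le (by norm_num : (1:ℝ)/2 ≤ 1)] at ht
    left
    intro hcon
    simp only [id] at hcon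
    have := ht.1
    rw [hcon] at this
    norm_num at this
  exact h1.trans h2

lemma JJ_nonneg (a c : ℝ) : 0 ≤ JJ a c := by
  apply intervalIntegral.integral_nonneg (by norm_num : (0:ℝ) ≤ 1)
  intro t ht
  exact mul_nonneg (Real.rpow_nonneg ht.1 _) (Real.rpow_nonneg (by linarith [ht.2]) _)

lemma JJ_pos {a c : ℝ} (ha : -1 < a) (hc : -1 < c) : 0 < JJ a c := by
  apply intervalIntegral.intervalIntegral_pos_of_pos_on (JJ_integrand_integrable ha hc)
  · intro t ht
    exact mul_pos (Real.rpow_pos_of_pos ht.1 _) (Real.rpow_pos_of_pos (by linarith [ht.2]) _)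
  · norm_num

lemma JJ_parts {a c : ℝ} (ha : 0 < a) (hc : 0 < c) :
    a * JJ (a - 1) c = c * JJ a (c - 1) := by
  have hcont : ContinuousOn (fun t : ℝ => t ^ a * (1 - t) ^ c) (Set.Icc 0 1) := by
    apply ContinuousOn.mul
    · exact (continuous_id.rpow_const fun x => Or.inr ha.le).continuousOn
    · exact ((continuous_const.sub continuous_id).rpow_const fun x => Or.inr hc.le).continuousOn
  have hderiv : ∀ t ∈ Set.Ioo (0:ℝ) 1, HasDerivAt (fun t : ℝ => t ^ a * (1 - t) ^ c)
      (a * t ^ (a - 1) * (1 - t) ^ c - c * (t ^ a * (1 - t) ^ (c - 1))) t := by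
    intro t ht
    have h1 : HasDerivAt (fun t : ℝ => t ^ a) (a * t ^ (a - 1)) t :=
      Real.hasDerivAt_rpow_const (Or.inl (ne_of_gt ht.1))
    have h2 : HasDerivAt (fun t : ℝ => (1 - t) ^ c) (-(c * (1 - t) ^ (c - 1))) t := by
      have hin : HasDerivAt (fun t : ℝ => 1 - t) (-1) t := by
        simpa using (hasDerivAt_id t).const_sub 1
      have hout : HasDerivAt (fun y : ℝ => y ^ c) (c * (1 - t) ^ (c - 1)) (1 - t) :=
        Real.hasDerivAt_rpow_const (Or.inl (ne_of_gt (by linarith [ht.2])))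
      simpa [Function.comp_def] using hout.comp t hin
    have : HasDerivAt (fun t : ℝ => t ^ a * (1 - t) ^ c)
        (a * t ^ (a - 1) * (1 - t) ^ c + t ^ a * -(c * (1 - t) ^ (c - 1))) t := h1.fun_mul h2
    convert this using 1
    ring
  have hint : IntervalIntegrable
      (fun t : ℝ => a * t ^ (a - 1) * (1 - t) ^ c - c * (t ^ a * (1 - t) ^ (c - 1)))
      MeasureTheory.volume 0 1 := by
    apply IntervalIntegrable.sub
    · have := (JJ_integrand_integrable (show (-1:ℝ) < a - 1 by linarith)
        (show (-1:ℝ) < c by linarith)).const_mul a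
      simpa [mul_assoc] using this
    · exact (JJ_integrand_integrable (show (-1:ℝ) < a by linarith)
        (show (-1:ℝ) < c - 1 by linarith)).const_mul c
  have heval := intervalIntegral.integral_eq_sub_of_hasDerivAt_of_le (by norm_num)
    hcont hderiv hint
  have hend : (fun t : ℝ => t ^ a * (1 - t) ^ c) 1 - (fun t : ℝ => t ^ a * (1 - t) ^ c) 0 = 0 := by
    simp only []
    rw [show (1:ℝ) - 1 = 0 by ring, Real.zero_rpow (ne_of_gt hc), Real.zero_rpow (ne_of_gt ha)]
    ring
  rw [hend] at heval
  have int1 : IntervalIntegrable (fun t : ℝ => a * t ^ (a - 1) * (1 - t) ^ c)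
      MeasureTheory.volume 0 1 := by
    have := (JJ_integrand_integrable (show (-1:ℝ) < a - 1 by linarith)
      (show (-1:ℝ) < c by linarith)).const_mul a
    simpa [mul_assoc] using this
  have int2 : IntervalIntegrable (fun t : ℝ => c * (t ^ a * (1 - t) ^ (c - 1)))
      MeasureTheory.volume 0 1 :=
    (JJ_integrand_integrable (show (-1:ℝ) < a by linarith)
      (show (-1:ℝ) < c - 1 by linarith)).const_mul c
  have e1 : (∫ t in (0:ℝ)..1, a * t ^ (a - 1) * (1 - t) ^ c) = a * JJ (a - 1) c := by
    simp_rw [mul_assoc]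
    rw [intervalIntegral.integral_const_mul]
    rfl
  have e2 : (∫ t in (0:ℝ)..1, c * (t ^ a * (1 - t) ^ (c - 1))) = c * JJ a (c - 1) := by
    rw [intervalIntegral.integral_const_mul]
    rfl
  rw [intervalIntegral.integral_sub int1 int2, e1, e2] at heval
  linarith

lemma JJ_split {a c : ℝ} (ha : -1 < a) (hc : 0 < c) :
    JJ a c = JJ a (c - 1) - JJ (a + 1) (c - 1) := by
  have hpt : Set.EqOn (fun t : ℝ => t ^ a * (1 - t) ^ c)
      (fun t : ℝ => t ^ a * (1 - t) ^ (c - 1) - t ^ (a + 1) * (1 - t) ^ (c - 1))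
      (Set.uIcc (0:ℝ) 1) := by
    intro t ht
    rw [Set.uIcc_of_le (by norm_num : (0:ℝ) ≤ 1)] at ht
    simp only []
    rcases eq_or_lt_of_le ht.1 with h0 | h0
    · -- t = 0
      rw [← h0]
      simp only [show (1:ℝ) - 0 = 1 by ring, Real.one_rpow,
        Real.zero_rpow (show a + 1 ≠ 0 by intro hcon; linarith), mul_one]
      ring
    rcases eq_or_lt_of_le ht.2 with h1 | h1
    · -- t = 1
      rw [h1]
      simp only [show (1:ℝ) - 1 = 0 by ring, Real.zero_rpow (ne_of_gt hc), Real.one_rpow]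
      ring
    · -- interior
      have hu : (1:ℝ) - t > 0 := by linarith
      rw [show c = (c - 1) + 1 by ring]
      rw [Real.rpow_add hu, Real.rpow_one]
      rw [show c - 1 + 1 - 1 = c - 1 by ring]
      rw [Real.rpow_add_one (ne_of_gt h0)]
      ring
  have he : JJ a c
      = ∫ t in (0:ℝ)..1, (t ^ a * (1 - t) ^ (c - 1) - t ^ (a + 1) * (1 - t) ^ (c - 1)) :=
    intervalIntegral.integral_congr hpt
  rw [he, intervalIntegral.integral_sub
    (JJ_integrand_integrable ha (show (-1:ℝ) < c - 1 by linarith))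
    (JJ_integrand_integrable (show (-1:ℝ) < a + 1 by linarith)
      (show (-1:ℝ) < c - 1 by linarith))]
  rfl

lemma JJ_rec {a c : ℝ} (ha : 0 < a) (hc : 0 < c) :
    (a + c) * JJ a (c - 1) = a * JJ (a - 1) (c - 1) := by
  have h1 := JJ_parts ha hc
  have h2 := JJ_split (show (-1:ℝ) < a - 1 by linarith) hc
  rw [show a - 1 + 1 = a by ring] at h2
  rw [h2] at h1
  ring_nf
  ring_nf at h1
  linarith

lemma qq_JJ (n : ℕ) {s : ℝ} (hs0 : 0 < s) (hs1 : s < 1) :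
    (-1:ℝ)^n * qq (n+1) s * JJ (-s) s
      = (Nat.factorial (n+1) : ℝ) * s * JJ ((n:ℝ) - s) s := by
  induction n with
  | zero =>
      have hq : qq 1 s = s := by simp [qq]
      rw [hq]
      norm_num
  | succ n ih =>
      have hrec := JJ_rec (a := (n:ℝ) + 1 - s) (c := s + 1) (by linarith) (by linarith)
      rw [show s + 1 - 1 = s by ring, show (n:ℝ) + 1 - s - 1 = (n:ℝ) - s by ring,
        show (n:ℝ) + 1 - s + (s + 1) = (n:ℝ) + 2 by ring] at hrec
      rw [qq_succ (n+1) s]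
      have hfac : (Nat.factorial (n+1+1) : ℝ) = ((n:ℝ) + 2) * (Nat.factorial (n+1) : ℝ) := by
        rw [Nat.factorial_succ]; push_cast; ring
      push_cast
      push_cast at hfac
      linear_combination ((n:ℝ) + 1 - s) * ih
        - ((Nat.factorial (n+1) : ℝ) * s) * hrec - (s * JJ ((n:ℝ) + 1 - s) s) * hfac

lemma neg_one_pow_sub {k m : ℕ} (h : m ≤ k) : (-1:ℝ)^(k-m) = (-1:ℝ)^(k+m) := by
  rw [show k + m = (k - m) + 2*m by omega, pow_add, pow_mul]
  norm_num

lemma binom_sum_pow (k : ℕ) (t : ℝ) :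
    ∑ m ∈ Finset.range (k+1), (-1:ℝ)^(k+m) * (k.choose m) * t^(k-m) = (1-t)^k := by
  have h := add_pow (1:ℝ) (-t) k
  calc ∑ m ∈ Finset.range (k+1), (-1:ℝ)^(k+m) * (k.choose m) * t^(k-m)
      = ∑ m ∈ Finset.range (k+1), (1:ℝ)^m * (-t)^(k-m) * (k.choose m) := by
        refine Finset.sum_congr rfl fun m hm => ?_
        have hm' : m ≤ k := Nat.lt_succ_iff.mp (Finset.mem_range.mp hm)
        rw [one_pow, neg_pow, ← neg_one_pow_sub hm', one_mul]
        ring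
  _ = (1 + -t)^k := h.symm
  _ = (1-t)^k := by ring_nf

lemma exp_ne {n k m : ℕ} {s : ℝ} (hs0 : 0 < s) (hs1 : s < 1) :
    ((n + k - m : ℕ):ℝ) - s ≠ 0 := by
  rcases Nat.eq_zero_or_pos (n + k - m) with h | h
  · rw [h]
    simp only [Nat.cast_zero, zero_sub, ne_eq, neg_eq_zero]
    linarith
  · have h1 : (1:ℝ) ≤ ((n + k - m : ℕ):ℝ) := by exact_mod_cast h
    intro hcon
    have : s = ((n + k - m : ℕ):ℝ) := by linarith
    linarith

lemma integrand_sum_eq (n k : ℕ) {s : ℝ} (hs0 : 0 < s) (hs1 : s < 1) :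
    Set.EqOn (fun t : ℝ => ∑ m ∈ Finset.range (k+1),
        (-1:ℝ)^(k+m) * (k.choose m) * (t ^ (((n+k-m : ℕ):ℝ) - s) * (1-t)^s))
      (fun t : ℝ => t ^ ((n:ℝ) - s) * (1-t) ^ (s + (k:ℕ)))
      (Set.uIcc (0:ℝ) 1) := by
  intro t ht
  rw [Set.uIcc_of_le (by norm_num : (0:ℝ) ≤ 1)] at ht
  simp only []
  have hnn : ((n:ℝ)) - s ≠ 0 := by
    have := exp_ne (n := n) (k := 0) (m := 0) hs0 hs1
    simpa using this
  rcases eq_or_lt_of_le ht.1 with h0 | h0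
  · rw [← h0]
    rw [show (1:ℝ) - 0 = 1 by ring]
    simp only [Real.one_rpow, mul_one]
    rw [Real.zero_rpow hnn]
    refine Finset.sum_eq_zero fun m hm => ?_
    rw [Real.zero_rpow (exp_ne hs0 hs1)]
    ring
  rcases eq_or_lt_of_le ht.2 with h1 | h1
  · rw [h1]
    rw [show (1:ℝ) - 1 = 0 by ring]
    rw [Real.zero_rpow (show s + (k:ℕ) ≠ 0 by positivity), Real.zero_rpow (ne_of_gt hs0)]
    rw [mul_zero]
    refine Finset.sum_eq_zero fun m hm => ?_
    ring
  · have ht1 : 0 < 1 - t := by linarith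
    calc ∑ m ∈ Finset.range (k+1),
          (-1:ℝ)^(k+m) * (k.choose m) * (t ^ (((n+k-m : ℕ):ℝ) - s) * (1-t)^s)
        = ∑ m ∈ Finset.range (k+1),
          ((-1:ℝ)^(k+m) * (k.choose m) * t^(k-m)) * (t ^ ((n:ℝ) - s) * (1-t)^s) := by
          refine Finset.sum_congr rfl fun m hm => ?_
          have hm' : m ≤ k := Nat.lt_succ_iff.mp (Finset.mem_range.mp hm)
          have hc1 : ((n+k-m : ℕ):ℝ) - s = ((n:ℝ) - s) + ((k - m : ℕ):ℝ) := by
            rw [Nat.cast_sub (by omega : m ≤ n + k), Nat.cast_sub hm']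
            push_cast
            ring
          rw [hc1, Real.rpow_add h0, Real.rpow_natCast]
          ring
    _ = (∑ m ∈ Finset.range (k+1), (-1:ℝ)^(k+m) * (k.choose m) * t^(k-m))
          * (t ^ ((n:ℝ) - s) * (1-t)^s) := (Finset.sum_mul _ _ _).symm
    _ = (1-t)^k * (t ^ ((n:ℝ) - s) * (1-t)^s) := by rw [binom_sum_pow]
    _ = t ^ ((n:ℝ) - s) * (1-t) ^ (s + (k:ℕ)) := by
          rw [Real.rpow_add ht1 s ((k:ℕ):ℝ), Real.rpow_natCast]
          ring

lemma main_nonneg {b : ℕ → ℝ}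
    (hb : ∀ x : ℝ, |x| < 1 → HasSum (fun n : ℕ => b n * x ^ n)
        (if x = 0 then 1 else x / Real.log (1 + x))) (n k : ℕ) :
    0 ≤ (-1:ℝ)^k * ∑ m ∈ Finset.range (k+1),
        (-1:ℝ)^m * (k.choose m) * ((-1:ℝ)^(n+k-m) * b (n+k-m+1)) := by
  set W : ℝ → ℝ := fun s => ∑ m ∈ Finset.range (k+1),
    ((-1:ℝ)^(k+m) * ((k.choose m : ℝ)) * ((-1:ℝ)^(n+k-m) / (Nat.factorial (n+k-m+1) : ℝ)))
      * qq (n+k-m+1) s with hWdef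
  have hWcont : Continuous W := by
    rw [hWdef]
    exact continuous_finset_sum _ fun m _ => continuous_const.mul (continuous_qq _)
  have hexpr : (-1:ℝ)^k * ∑ m ∈ Finset.range (k+1),
      (-1:ℝ)^m * (k.choose m) * ((-1:ℝ)^(n+k-m) * b (n+k-m+1))
      = ∫ s in (0:ℝ)..1, W s := by
    rw [hWdef, intervalIntegral.integral_finset_sum
      (fun m _ => ((continuous_qq _).intervalIntegrable 0 1).const_mul _),
      Finset.mul_sum]
    refine Finset.sum_congr rfl fun m hm => ?_
    rw [intervalIntegral.integral_const_mul, b_eq_cc hb, cc, pow_add]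
    ring
  rw [hexpr]
  apply intervalIntegral.integral_nonneg (by norm_num : (0:ℝ) ≤ 1)
  intro s hs
  have hIoo : ∀ u ∈ Set.Ioo (0:ℝ) 1, 0 ≤ W u := by
    intro u hu
    obtain ⟨hu0, hu1⟩ := hu
    have hJpos : 0 < JJ (-u) u := JJ_pos (by linarith) (by linarith)
    have hprod : W u * JJ (-u) u = u * JJ ((n:ℝ) - u) (u + (k:ℕ)) := by
      rw [hWdef]
      simp only []
      rw [Finset.sum_mul]
      have hterm : ∀ m ∈ Finset.range (k+1),
          ((-1:ℝ)^(k+m) * ((k.choose m : ℝ))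
              * ((-1:ℝ)^(n+k-m) / (Nat.factorial (n+k-m+1) : ℝ)))
            * qq (n+k-m+1) u * JJ (-u) u
          = (-1:ℝ)^(k+m) * ((k.choose m : ℝ)) * (u * JJ (((n+k-m:ℕ):ℝ) - u) u) := by
        intro m hm
        have h := qq_JJ (n+k-m) hu0 hu1
        have hF : (Nat.factorial (n+k-m+1) : ℝ) ≠ 0 := by
          exact_mod_cast Nat.factorial_ne_zero (n+k-m+1)
        have h' : (-1:ℝ)^(n+k-m) * qq (n+k-m+1) u * JJ (-u) u
            / (Nat.factorial (n+k-m+1) : ℝ) = u * JJ (((n+k-m:ℕ):ℝ) - u) u := by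
          rw [div_eq_iff hF]
          linear_combination h
        linear_combination ((-1:ℝ)^(k+m) * ((k.choose m : ℝ))) * h'
      rw [Finset.sum_congr rfl hterm]
      have hpull : ∑ m ∈ Finset.range (k+1),
          (-1:ℝ)^(k+m) * ((k.choose m : ℝ)) * (u * JJ (((n+k-m:ℕ):ℝ) - u) u)
          = u * ∑ m ∈ Finset.range (k+1),
              (-1:ℝ)^(k+m) * ((k.choose m : ℝ)) * JJ (((n+k-m:ℕ):ℝ) - u) u := by
        rw [Finset.mul_sum]
        exact Finset.sum_congr rfl fun m _ => by ring
      rw [hpull]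
      congr 1
      have hJm : ∀ m ∈ Finset.range (k+1),
          (-1:ℝ)^(k+m) * ((k.choose m : ℝ)) * JJ (((n+k-m:ℕ):ℝ) - u) u
          = ∫ t in (0:ℝ)..1,
              (-1:ℝ)^(k+m) * ((k.choose m : ℝ)) * (t ^ (((n+k-m:ℕ):ℝ) - u) * (1-t)^u) :=
        fun m hm => (intervalIntegral.integral_const_mul _ _).symm
      rw [Finset.sum_congr rfl hJm, ← intervalIntegral.integral_finset_sum
        (fun m _ => (JJ_integrand_integrable
          (by
            have : (0:ℝ) ≤ ((n+k-m:ℕ):ℝ) := Nat.cast_nonneg _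
            linarith)
          (by linarith)).const_mul _)]
      rw [JJ]
      exact intervalIntegral.integral_congr (integrand_sum_eq n k hu0 hu1)
    have h0 : 0 ≤ W u * JJ (-u) u := hprod ▸ mul_nonneg hu0.le (JJ_nonneg _ _)
    have h1 : (0:ℝ) * JJ (-u) u ≤ W u * JJ (-u) u := by rw [zero_mul]; exact h0
    exact le_of_mul_le_mul_right h1 hJpos
  have hclosed : IsClosed {x : ℝ | 0 ≤ W x} := isClosed_le continuous_const hWcont
  have hsub : Set.Icc (0:ℝ) 1 ⊆ {x : ℝ | 0 ≤ W x} := by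
    rw [← closure_Ioo (by norm_num : (0:ℝ) ≠ 1)]
    exact hclosed.closure_subset_iff.mpr (fun u hu => hIoo u hu)
  exact hsub hs

/-- The sequence `μₙ = (-1)ⁿ b_{n+1}` of Bernoulli numbers of the second kind (where `bₙ`
is the `n`-th Taylor coefficient at `0` of `x ↦ x/ln(1+x)`, extended by the value `1` at
`x = 0`) is a completely monotonic sequence: `μₙ ≥ 0` and
`(-1)^k Δ^k μₙ = (-1)^k Σ_{m=0}^k (-1)^m C(k,m) μ_{n+k-m} ≥ 0` for all `n, k ≥ 0`. -/
theorem stmt_4 (b : ℕ → ℝ)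
    (hb : ∀ x : ℝ, |x| < 1 →
      HasSum (fun n : ℕ => b n * x ^ n)
        (if x = 0 then 1 else x / Real.log (1 + x))) :
    (∀ n : ℕ, 0 ≤ (-1 : ℝ) ^ n * b (n + 1)) ∧
    (∀ n k : ℕ,
      0 ≤ (-1 : ℝ) ^ k *
        ∑ m ∈ Finset.range (k + 1),
          (-1 : ℝ) ^ m * (k.choose m) * ((-1 : ℝ) ^ (n + k - m) * b (n + k - m + 1))) := by
  constructor
  · intro n
    simpa using main_nonneg hb n 0
  · intro n k
    exact main_nonneg hb n k
end CM4
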